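/- Let m ≥ 1 be an integer, δ > -m, and define p_k(δ) = (2 + δ/m)·Γ(k+δ)Γ(m+2+δ+δ/m) / (Γ(m+δ)Γ(k+3+δ+δ/m)) for integers k ≥ m. Then Σ_{k=m}^∞ p_k(δ) = 1. -/

import Mathlib

open Real

/-- The limiting degree distribution of the affine preferential attachment
model with out-degree `m` and parameter `δ`, for degrees `k ≥ m`. -/
noncomputable def paDegreeDist (m : ℕ) (δ : ℝ) (k : ℕ) : ℝ :=
  (2 + δ / m) * (Real.Gamma ((k : ℝ) + δ) * Real.Gamma ((m : ℝ) + 2 + δ + δ / m)) /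
    (Real.Gamma ((m : ℝ) + δ) * Real.Gamma ((k : ℝ) + 3 + δ + δ / m))

theorem paDegreeDist_tsum_eq_one (m : ℕ) (hm : 1 ≤ m) (δ : ℝ) (hδ : -(m : ℝ) < δ) :
    ∑' k : ℕ, paDegreeDist m δ (m + k) = 1 := by
  have hm0 : (0:ℝ) < m := by exact_mod_cast hm
  have hm' : (m:ℝ) ≠ 0 := hm0.ne'
  set s : ℝ := δ / m with hs_def
  have hs : -1 < s := by
    rw [hs_def, lt_div_iff₀ hm0]
    linarith
  have hmδ : 0 < (m:ℝ) + δ := by linarith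
  set g : ℕ → ℝ := fun k => Real.Gamma ((m:ℝ) + k + δ) with hg_def
  set h : ℕ → ℝ := fun k => Real.Gamma ((m:ℝ) + k + 2 + δ + s) with hh_def
  have hgpos : ∀ k : ℕ, 0 < g k := fun k =>
    Real.Gamma_pos_of_pos (by have : (0:ℝ) ≤ k := Nat.cast_nonneg k; linarith)
  have hhpos : ∀ k : ℕ, 0 < h k := fun k =>
    Real.Gamma_pos_of_pos (by have : (0:ℝ) ≤ k := Nat.cast_nonneg k; linarith)
  have hg_succ : ∀ k : ℕ, g (k + 1) = ((m:ℝ) + k + δ) * g k := by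
    intro k
    have hk : (0:ℝ) ≤ k := Nat.cast_nonneg k
    show Real.Gamma ((m:ℝ) + (k + 1 : ℕ) + δ) = ((m:ℝ) + k + δ) * Real.Gamma ((m:ℝ) + k + δ)
    have e : ((m:ℝ) + (k + 1 : ℕ) + δ) = ((m:ℝ) + k + δ) + 1 := by push_cast; ring
    rw [e, Real.Gamma_add_one (by linarith)]
  have hh_succ : ∀ k : ℕ, h (k + 1) = ((m:ℝ) + k + 2 + δ + s) * h k := by
    intro k
    have hk : (0:ℝ) ≤ k := Nat.cast_nonneg k
    show Real.Gamma ((m:ℝ) + (k + 1 : ℕ) + 2 + δ + s)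
      = ((m:ℝ) + k + 2 + δ + s) * Real.Gamma ((m:ℝ) + k + 2 + δ + s)
    have e : ((m:ℝ) + (k + 1 : ℕ) + 2 + δ + s) = ((m:ℝ) + k + 2 + δ + s) + 1 := by
      push_cast; ring
    rw [e, Real.Gamma_add_one (by linarith)]
  set f : ℕ → ℝ := fun k => g k / h k with hf_def
  have hdiff : ∀ k : ℕ, f k - f (k + 1) = (2 + s) * g k / h (k + 1) := by
    intro k
    have hk : (0:ℝ) ≤ k := Nat.cast_nonneg k
    show g k / h k - g (k + 1) / h (k + 1) = (2 + s) * g k / h (k + 1)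
    rw [hg_succ, hh_succ]
    have h1 := (hgpos k).ne'
    have h2 := (hhpos k).ne'
    have h3 : ((m:ℝ) + k + 2 + δ + s) ≠ 0 := by
      have : 0 < (m:ℝ) + k + 2 + δ + s := by linarith
      exact this.ne'
    field_simp
    ring
  -- each term is a telescoping difference times a constant
  have hterm : ∀ k : ℕ, paDegreeDist m δ (m + k) = (h 0 / g 0) * (f k - f (k + 1)) := by
    intro k
    rw [hdiff, paDegreeDist]
    have harg1 : ((m + k : ℕ) : ℝ) + δ = (m:ℝ) + (k:ℝ) + δ := by push_cast; ring
    have harg2 : ((m + k : ℕ) : ℝ) + 3 + δ + δ / m = (m:ℝ) + ((k:ℕ) + 1 : ℕ) + 2 + δ + s := by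
      push_cast; ring
    have harg3 : (m:ℝ) + 2 + δ + δ / m = (m:ℝ) + ((0:ℕ):ℝ) + 2 + δ + s := by push_cast; ring
    have harg4 : (m:ℝ) + δ = (m:ℝ) + ((0:ℕ):ℝ) + δ := by push_cast; ring
    rw [harg1, harg2, harg3, harg4]
    show (2 + s) * (g k * h 0) / (g 0 * h (k + 1)) = h 0 / g 0 * ((2 + s) * g k / h (k + 1))
    have h1 := (hgpos 0).ne'
    have h2 := (hhpos 0).ne'
    have h3 := (hhpos (k + 1)).ne'
    field_simp
  -- f tends to 0
  have hf_tendsto : Filter.Tendsto f Filter.atTop (nhds 0) := by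
    apply squeeze_zero' (g := fun n : ℕ => 1 / (n:ℝ))
    · filter_upwards with n
      exact le_of_lt (div_pos (hgpos n) (hhpos n))
    · have hev : ∀ᶠ n : ℕ in Filter.atTop, 2 - ((m:ℝ) + δ) ≤ (n:ℝ) :=
        (tendsto_natCast_atTop_atTop (R := ℝ)).eventually_ge_atTop _
      have hev1 : ∀ᶠ n : ℕ in Filter.atTop, 1 ≤ (n:ℝ) :=
        (tendsto_natCast_atTop_atTop (R := ℝ)).eventually_ge_atTop _
      filter_upwards [hev, hev1] with n hn hn1
      have hn0 : (0:ℝ) < n := by linarith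
      have harg : (2:ℝ) ≤ (m:ℝ) + n + δ := by linarith
      have harg2 : (2:ℝ) ≤ (m:ℝ) + n + 1 + δ + s := by linarith
      have hmono : Real.Gamma ((m:ℝ) + n + δ) ≤ Real.Gamma ((m:ℝ) + n + 1 + δ + s) :=
        Real.Gamma_strictMonoOn_Ici.monotoneOn harg harg2 (by linarith)
      have hc : (0:ℝ) < (m:ℝ) + n + 1 + δ + s := by linarith
      have hGpos : 0 < Real.Gamma ((m:ℝ) + n + 1 + δ + s) :=
        Real.Gamma_pos_of_pos hc
      have hsplit : h n = ((m:ℝ) + n + 1 + δ + s) * Real.Gamma ((m:ℝ) + n + 1 + δ + s) := by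
        show Real.Gamma ((m:ℝ) + n + 2 + δ + s)
          = ((m:ℝ) + n + 1 + δ + s) * Real.Gamma ((m:ℝ) + n + 1 + δ + s)
        have e : (m:ℝ) + n + 2 + δ + s = ((m:ℝ) + n + 1 + δ + s) + 1 := by ring
        rw [e, Real.Gamma_add_one hc.ne']
      have step1 : f n ≤ 1 / ((m:ℝ) + n + 1 + δ + s) := by
        show g n / h n ≤ 1 / ((m:ℝ) + n + 1 + δ + s)
        rw [hsplit, div_le_div_iff₀ (by positivity) hc]
        have : g n ≤ Real.Gamma ((m:ℝ) + n + 1 + δ + s) := hmono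
        nlinarith
      calc f n ≤ 1 / ((m:ℝ) + n + 1 + δ + s) := step1
        _ ≤ 1 / (n:ℝ) := by
            apply one_div_le_one_div_of_le hn0
            linarith
    · exact tendsto_one_div_atTop_nhds_zero_nat
  have hnonneg : ∀ k : ℕ, 0 ≤ f k - f (k + 1) := by
    intro k
    rw [hdiff]
    have := (hgpos k).le
    have := (hhpos (k + 1)).le
    have h2s : (0:ℝ) ≤ 2 + s := by linarith
    positivity
  have htel : HasSum (fun k => f k - f (k + 1)) (f 0) := by
    rw [hasSum_iff_tendsto_nat_of_nonneg hnonneg]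
    have hsum : ∀ n : ℕ, ∑ i ∈ Finset.range n, (f i - f (i + 1)) = f 0 - f n :=
      fun n => Finset.sum_range_sub' f n
    simp only [hsum]
    have : Filter.Tendsto (fun n : ℕ => f 0 - f n) Filter.atTop (nhds (f 0 - 0)) :=
      Filter.Tendsto.sub tendsto_const_nhds hf_tendsto
    simpa using this
  have hsum : HasSum (fun k => paDegreeDist m δ (m + k)) ((h 0 / g 0) * f 0) := by
    have h2 := htel.mul_left (h 0 / g 0)
    simpa only [← hterm] using h2
  rw [hsum.tsum_eq]
  show h 0 / g 0 * (g 0 / h 0) = 1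
  have h1 := (hgpos 0).ne'
  have h2 := (hhpos 0).ne'
  field_simp
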